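/- A formal power series f ∈ ℝ[[x₁,x₂,ξ₁,ξ₂]] satisfies {f,q₁} = 0 and {f,q₂} = 0 if and only if there exists a formal series g ∈ ℝ[[t₁,t₂]] with f = g(q₁,q₂). -/

import Mathlib

noncomputable section



/-- Formal power series in the four variables `x₁, ξ₁, x₂, ξ₂`
(indexed `0, 1, 2, 3` respectively). -/
abbrev PS4 : Type := MvPowerSeries (Fin 4) ℝ

/-- Formal power series in two variables `t₁, t₂`. -/
abbrev PS2 : Type := MvPowerSeries (Fin 2) ℝ

/-- Total degree of a monomial. -/
def degOf {n : ℕ} (m : Fin n →₀ ℕ) : ℕ := m.sum fun _ k => k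

/-- Build a formal power series from its coefficient function. -/
def mk4 (F : (Fin 4 →₀ ℕ) → ℝ) : PS4 := F

/-- Coefficient of a formal power series at a monomial. -/
def coeff4 (m : Fin 4 →₀ ℕ) (f : PS4) : ℝ := MvPowerSeries.coeff m f

/-- Formal partial derivative with respect to the `i`-th variable. -/
def pdF (i : Fin 4) (f : PS4) : PS4 :=
  mk4 fun m => ((m i : ℝ) + 1) * coeff4 (m + Finsupp.single i 1) f

/-- Formal Poisson bracket
`{f,g} = ∂f/∂ξ₁·∂g/∂x₁ − ∂f/∂x₁·∂g/∂ξ₁ + ∂f/∂ξ₂·∂g/∂x₂ − ∂f/∂x₂·∂g/∂ξ₂`,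
with variables ordered `(x₁, ξ₁, x₂, ξ₂) = (0, 1, 2, 3)`. -/
def poisF (f g : PS4) : PS4 :=
  pdF 1 f * pdF 0 g - pdF 0 f * pdF 1 g + pdF 3 f * pdF 2 g - pdF 2 f * pdF 3 g

/-- The focus-focus quadratic form `q₁ = x₁ξ₁ + x₂ξ₂` as a formal series. -/
def q1F : PS4 :=
  MvPowerSeries.X 0 * MvPowerSeries.X 1 + MvPowerSeries.X 2 * MvPowerSeries.X 3

/-- The focus-focus quadratic form `q₂ = x₁ξ₂ − x₂ξ₁` as a formal series. -/
def q2F : PS4 :=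
  MvPowerSeries.X 0 * MvPowerSeries.X 3 - MvPowerSeries.X 2 * MvPowerSeries.X 1

/-- A formal series is `O(N)` if all its coefficients in total degree `< N` vanish. -/
def OrdGE (N : ℕ) (f : PS4) : Prop := ∀ m : Fin 4 →₀ ℕ, degOf m < N → coeff4 m f = 0

/-- `ad_A f = {A, f}`. -/
def adF (A f : PS4) : PS4 := poisF A f

/-- `exp(ad_A) f = Σ_k ad_Aᵏ(f)/k!`.  When `A ∈ O(3)`, the coefficient of any fixed
monomial `m` of `ad_Aᵏ f` vanishes for `k > deg m`, so the coefficientwise truncated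
sum below is the honest exponential. -/
def expAdF (A f : PS4) : PS4 :=
  mk4 fun m => ∑ k ∈ Finset.range (degOf m + 1),
    ((Nat.factorial k : ℝ))⁻¹ * coeff4 m ((adF A)^[k] f)

/-- Substitution `g(q₁,q₂)` of the quadratic forms `q₁,q₂` into a formal series `g` of
two variables: since `q₁ᵏq₂ˡ` is homogeneous of degree `2(k+l)`, the coefficient of a
monomial `m` only involves finitely many `(k,l)` and the truncated sum below is the
honest substitution. -/
def substQF (g : PS2) : PS4 :=
  mk4 fun m => ∑ kl ∈ Finset.range (degOf m + 1) ×ˢ Finset.range (degOf m + 1),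
    MvPowerSeries.coeff (Finsupp.single 0 kl.1 + Finsupp.single 1 kl.2) g *
      coeff4 m (q1F ^ kl.1 * q2F ^ kl.2)


open Finsupp MvPowerSeries

/-- The monomial `x1^a ξ1^b x2^c ξ2^d` as an exponent vector. -/
def mo (a b c d : ℕ) : Fin 4 →₀ ℕ :=
  Finsupp.single 0 a + Finsupp.single 1 b + Finsupp.single 2 c + Finsupp.single 3 d

@[simp] lemma mo_apply0 (a b c d : ℕ) : mo a b c d 0 = a := by
  simp [mo, Finsupp.single_apply]
@[simp] lemma mo_apply1 (a b c d : ℕ) : mo a b c d 1 = b := by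
  simp [mo, Finsupp.single_apply]
@[simp] lemma mo_apply2 (a b c d : ℕ) : mo a b c d 2 = c := by
  simp [mo, Finsupp.single_apply]
@[simp] lemma mo_apply3 (a b c d : ℕ) : mo a b c d 3 = d := by
  simp [mo, Finsupp.single_apply]

lemma mo_eta (m : Fin 4 →₀ ℕ) : mo (m 0) (m 1) (m 2) (m 3) = m := by
  ext i
  fin_cases i <;> simp

lemma degOf_eq (m : Fin 4 →₀ ℕ) : degOf m = m 0 + m 1 + m 2 + m 3 := by
  rw [degOf, Finsupp.sum_fintype (h := fun _ => rfl), Fin.sum_univ_four]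

@[simp] lemma degOf_mo (a b c d : ℕ) : degOf (mo a b c d) = a + b + c + d := by
  rw [degOf_eq] ; simp

lemma mo_inj {a b c d a' b' c' d' : ℕ} (h : mo a b c d = mo a' b' c' d') :
    a = a' ∧ b = b' ∧ c = c' ∧ d = d' := by
  refine ⟨?_, ?_, ?_, ?_⟩ <;>
  · have h0 := congrArg (fun m : Fin 4 →₀ ℕ => m 0) h
    have h1 := congrArg (fun m : Fin 4 →₀ ℕ => m 1) h
    have h2 := congrArg (fun m : Fin 4 →₀ ℕ => m 2) h
    have h3 := congrArg (fun m : Fin 4 →₀ ℕ => m 3) h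
    simp at h0 h1 h2 h3
    omega

section Bridge
open MvPolynomial

abbrev P4 := MvPolynomial (Fin 4) ℝ

lemma coeff4_mk4 (F : (Fin 4 →₀ ℕ) → ℝ) (m : Fin 4 →₀ ℕ) : coeff4 m (mk4 F) = F m := rfl

lemma coeff4_coe (p : P4) (m : Fin 4 →₀ ℕ) : coeff4 m (↑p : PS4) = MvPolynomial.coeff m p := rfl

lemma coeff4_pd (i : Fin 4) (f : PS4) (m : Fin 4 →₀ ℕ) :
    coeff4 m (pdF i f) = ((m i : ℝ) + 1) * coeff4 (m + Finsupp.single i 1) f := rfl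

lemma coeff_pderiv4 (i : Fin 4) (p : P4) (m : Fin 4 →₀ ℕ) :
    MvPolynomial.coeff m (MvPolynomial.pderiv i p)
      = ((m i : ℝ) + 1) * MvPolynomial.coeff (m + Finsupp.single i 1) p := by
  induction p using MvPolynomial.induction_on' with
  | monomial s a =>
    rw [pderiv_monomial, MvPolynomial.coeff_monomial, MvPolynomial.coeff_monomial]
    by_cases hs : s i = 0
    · have h1 : s - Finsupp.single i 1 = s := by
        ext j
        rw [Finsupp.tsub_apply]
        rcases eq_or_ne j i with rfl | hj
        · simp [hs]
        · simp [Finsupp.single_apply, Ne.symm hj]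
      have h2 : s ≠ m + Finsupp.single i 1 := by
        intro h
        have := congrArg (fun u : Fin 4 →₀ ℕ => u i) h
        simp [hs] at this
      rw [h1, if_neg h2]
      split <;> simp [hs]
    · have hle : Finsupp.single i 1 ≤ s := by
        rw [Finsupp.single_le_iff]; omega
      have hiff : s - Finsupp.single i 1 = m ↔ s = m + Finsupp.single i 1 := by
        constructor
        · intro h; rw [← h, tsub_add_cancel_of_le hle]
        · intro h; rw [h, add_tsub_cancel_right]
      by_cases h : s - Finsupp.single i 1 = m
      · rw [if_pos h, if_pos (hiff.mp h)]
        have : s i = m i + 1 := by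
          have := congrArg (fun u : Fin 4 →₀ ℕ => u i) (hiff.mp h)
          simpa using this
        rw [this]
        push_cast
        ring
      · rw [if_neg h, if_neg (fun hh => h (hiff.mpr hh))]
        simp
  | add p q ihp ihq =>
    simp only [map_add, MvPolynomial.coeff_add, ihp, ihq]
    ring

lemma pdF_coe (i : Fin 4) (p : P4) : pdF i (↑p : PS4) = ↑(MvPolynomial.pderiv i p) := by
  apply MvPowerSeries.ext
  intro m
  show coeff4 m _ = coeff4 m _
  rw [coeff4_pd, coeff4_coe, coeff4_coe, coeff_pderiv4]

/-- Polynomial versions of the quadratic forms. -/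
def Q1 : P4 := MvPolynomial.X 0 * MvPolynomial.X 1 + MvPolynomial.X 2 * MvPolynomial.X 3
def Q2 : P4 := MvPolynomial.X 0 * MvPolynomial.X 3 - MvPolynomial.X 2 * MvPolynomial.X 1

lemma coe_sub4 (p q : P4) : ((p - q : P4) : PS4) = (↑p : PS4) - ↑q := by
  have := map_sub (MvPolynomial.coeToMvPowerSeries.ringHom (σ := Fin 4) (R := ℝ)) p q
  exact this

lemma q1F_coe : q1F = ((Q1 : P4) : PS4) := by
  simp only [Q1]
  push_cast
  rfl
lemma q2F_coe : q2F = ((Q2 : P4) : PS4) := by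
  simp only [Q2, coe_sub4]
  push_cast
  rfl

/-- Polynomial Poisson bracket. -/
def poisP (p q : P4) : P4 :=
  pderiv 1 p * pderiv 0 q - pderiv 0 p * pderiv 1 q
    + pderiv 3 p * pderiv 2 q - pderiv 2 p * pderiv 3 q

lemma poisF_coe (p q : P4) : poisF (↑p : PS4) (↑q : PS4) = ↑(poisP p q) := by
  simp only [poisF, poisP, pdF_coe, coe_sub4, MvPolynomial.coe_add, MvPolynomial.coe_mul]

lemma poisP_mul_left (u v w : P4) :
    poisP (u * v) w = u * poisP v w + v * poisP u w := by
  simp only [poisP, pderiv_mul]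
  ring

lemma pderiv_Q1_0 : pderiv (0 : Fin 4) Q1 = MvPolynomial.X 1 := by
  simp [Q1, pderiv_mul, MvPolynomial.pderiv_X_self, MvPolynomial.pderiv_X_of_ne (show (1:Fin 4) ≠ 0 by decide),
    MvPolynomial.pderiv_X_of_ne (show (2:Fin 4) ≠ 0 by decide), MvPolynomial.pderiv_X_of_ne (show (3:Fin 4) ≠ 0 by decide)]

end Bridge
section Brackets
open MvPolynomial

lemma coe_neg4 (p : P4) : ((-p : P4) : PS4) = -(↑p : PS4) := by
  have := map_neg (MvPolynomial.coeToMvPowerSeries.ringHom (σ := Fin 4) (R := ℝ)) p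
  exact this

lemma pderiv_Q1_1 : pderiv (1 : Fin 4) Q1 = MvPolynomial.X 0 := by
  simp [Q1, pderiv_mul, MvPolynomial.pderiv_X_self, MvPolynomial.pderiv_X_of_ne (show (0:Fin 4) ≠ 1 by decide),
    MvPolynomial.pderiv_X_of_ne (show (2:Fin 4) ≠ 1 by decide), MvPolynomial.pderiv_X_of_ne (show (3:Fin 4) ≠ 1 by decide)]
lemma pderiv_Q1_2 : pderiv (2 : Fin 4) Q1 = MvPolynomial.X 3 := by
  simp [Q1, pderiv_mul, MvPolynomial.pderiv_X_self, MvPolynomial.pderiv_X_of_ne (show (0:Fin 4) ≠ 2 by decide),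
    MvPolynomial.pderiv_X_of_ne (show (1:Fin 4) ≠ 2 by decide), MvPolynomial.pderiv_X_of_ne (show (3:Fin 4) ≠ 2 by decide)]
lemma pderiv_Q1_3 : pderiv (3 : Fin 4) Q1 = MvPolynomial.X 2 := by
  simp [Q1, pderiv_mul, MvPolynomial.pderiv_X_self, MvPolynomial.pderiv_X_of_ne (show (0:Fin 4) ≠ 3 by decide),
    MvPolynomial.pderiv_X_of_ne (show (1:Fin 4) ≠ 3 by decide), MvPolynomial.pderiv_X_of_ne (show (2:Fin 4) ≠ 3 by decide)]
lemma pderiv_Q2_0 : pderiv (0 : Fin 4) Q2 = MvPolynomial.X 3 := by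
  simp [Q2, pderiv_mul, MvPolynomial.pderiv_X_self, MvPolynomial.pderiv_X_of_ne (show (1:Fin 4) ≠ 0 by decide),
    MvPolynomial.pderiv_X_of_ne (show (2:Fin 4) ≠ 0 by decide), MvPolynomial.pderiv_X_of_ne (show (3:Fin 4) ≠ 0 by decide)]
lemma pderiv_Q2_1 : pderiv (1 : Fin 4) Q2 = -MvPolynomial.X 2 := by
  simp [Q2, pderiv_mul, MvPolynomial.pderiv_X_self, MvPolynomial.pderiv_X_of_ne (show (0:Fin 4) ≠ 1 by decide),
    MvPolynomial.pderiv_X_of_ne (show (2:Fin 4) ≠ 1 by decide), MvPolynomial.pderiv_X_of_ne (show (3:Fin 4) ≠ 1 by decide)]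
lemma pderiv_Q2_2 : pderiv (2 : Fin 4) Q2 = -MvPolynomial.X 1 := by
  simp [Q2, pderiv_mul, MvPolynomial.pderiv_X_self, MvPolynomial.pderiv_X_of_ne (show (0:Fin 4) ≠ 2 by decide),
    MvPolynomial.pderiv_X_of_ne (show (1:Fin 4) ≠ 2 by decide), MvPolynomial.pderiv_X_of_ne (show (3:Fin 4) ≠ 2 by decide)]
lemma pderiv_Q2_3 : pderiv (3 : Fin 4) Q2 = MvPolynomial.X 0 := by
  simp [Q2, pderiv_mul, MvPolynomial.pderiv_X_self, MvPolynomial.pderiv_X_of_ne (show (0:Fin 4) ≠ 3 by decide),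
    MvPolynomial.pderiv_X_of_ne (show (1:Fin 4) ≠ 3 by decide), MvPolynomial.pderiv_X_of_ne (show (2:Fin 4) ≠ 3 by decide)]

lemma poisP_Q1_Q1 : poisP Q1 Q1 = 0 := by
  simp only [poisP, pderiv_Q1_0, pderiv_Q1_1, pderiv_Q1_2, pderiv_Q1_3]; ring
lemma poisP_Q2_Q1 : poisP Q2 Q1 = 0 := by
  simp only [poisP, pderiv_Q1_0, pderiv_Q1_1, pderiv_Q1_2, pderiv_Q1_3,
    pderiv_Q2_0, pderiv_Q2_1, pderiv_Q2_2, pderiv_Q2_3]; ring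
lemma poisP_Q1_Q2 : poisP Q1 Q2 = 0 := by
  simp only [poisP, pderiv_Q1_0, pderiv_Q1_1, pderiv_Q1_2, pderiv_Q1_3,
    pderiv_Q2_0, pderiv_Q2_1, pderiv_Q2_2, pderiv_Q2_3]; ring
lemma poisP_Q2_Q2 : poisP Q2 Q2 = 0 := by
  simp only [poisP, pderiv_Q2_0, pderiv_Q2_1, pderiv_Q2_2, pderiv_Q2_3]; ring

lemma poisP_one (W : P4) : poisP 1 W = 0 := by
  simp [poisP]

lemma poisP_pow (W : P4) (hW1 : poisP Q1 W = 0) (hW2 : poisP Q2 W = 0) (k l : ℕ) :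
    poisP (Q1 ^ k * Q2 ^ l) W = 0 := by
  induction k with
  | zero =>
    induction l with
    | zero => simpa using poisP_one W
    | succ l ih =>
      have h : (Q1 ^ 0 * Q2 ^ (l + 1) : P4) = Q2 * (Q1 ^ 0 * Q2 ^ l) := by ring
      rw [h, poisP_mul_left, hW2, ih]
      ring
  | succ k ih =>
    have h : (Q1 ^ (k + 1) * Q2 ^ l : P4) = Q1 * (Q1 ^ k * Q2 ^ l) := by ring
    rw [h, poisP_mul_left, hW1, ih]
    ring

lemma PklF_coe (k l : ℕ) : (q1F ^ k * q2F ^ l : PS4) = ↑((Q1 ^ k * Q2 ^ l : P4)) := by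
  rw [q1F_coe, q2F_coe]
  push_cast
  rfl

lemma poisF_Pkl_q1 (k l : ℕ) : poisF (q1F ^ k * q2F ^ l) q1F = 0 := by
  rw [PklF_coe, q1F_coe, poisF_coe, poisP_pow _ poisP_Q1_Q1 poisP_Q2_Q1]
  rfl

lemma poisF_Pkl_q2 (k l : ℕ) : poisF (q1F ^ k * q2F ^ l) q2F = 0 := by
  rw [PklF_coe, q2F_coe, poisF_coe, poisP_pow _ poisP_Q1_Q2 poisP_Q2_Q2]
  rfl

/-- values of the partial derivatives of q1F, q2F -/
lemma pd_q1_0 : pdF 0 q1F = MvPowerSeries.X 1 := by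
  rw [q1F_coe, pdF_coe, pderiv_Q1_0, MvPolynomial.coe_X]
lemma pd_q1_1 : pdF 1 q1F = MvPowerSeries.X 0 := by
  rw [q1F_coe, pdF_coe, pderiv_Q1_1, MvPolynomial.coe_X]
lemma pd_q1_2 : pdF 2 q1F = MvPowerSeries.X 3 := by
  rw [q1F_coe, pdF_coe, pderiv_Q1_2, MvPolynomial.coe_X]
lemma pd_q1_3 : pdF 3 q1F = MvPowerSeries.X 2 := by
  rw [q1F_coe, pdF_coe, pderiv_Q1_3, MvPolynomial.coe_X]
lemma pd_q2_0 : pdF 0 q2F = MvPowerSeries.X 3 := by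
  rw [q2F_coe, pdF_coe, pderiv_Q2_0, MvPolynomial.coe_X]
lemma pd_q2_1 : pdF 1 q2F = -MvPowerSeries.X 2 := by
  rw [q2F_coe, pdF_coe, pderiv_Q2_1, coe_neg4, MvPolynomial.coe_X]
lemma pd_q2_2 : pdF 2 q2F = -MvPowerSeries.X 1 := by
  rw [q2F_coe, pdF_coe, pderiv_Q2_2, coe_neg4, MvPolynomial.coe_X]
lemma pd_q2_3 : pdF 3 q2F = MvPowerSeries.X 0 := by
  rw [q2F_coe, pdF_coe, pderiv_Q2_3, MvPolynomial.coe_X]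

lemma coeff4_add (m : Fin 4 →₀ ℕ) (u v : PS4) : coeff4 m (u + v) = coeff4 m u + coeff4 m v :=
  map_add _ _ _
lemma coeff4_sub (m : Fin 4 →₀ ℕ) (u v : PS4) : coeff4 m (u - v) = coeff4 m u - coeff4 m v :=
  map_sub _ _ _
lemma coeff4_neg (m : Fin 4 →₀ ℕ) (u : PS4) : coeff4 m (-u) = -coeff4 m u :=
  map_neg _ _
lemma coeff4_zero (m : Fin 4 →₀ ℕ) : coeff4 m (0 : PS4) = 0 := map_zero _

lemma coeff4_mul_X (f : PS4) (j : Fin 4) (m : Fin 4 →₀ ℕ) :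
    coeff4 m (f * MvPowerSeries.X j)
      = if m j = 0 then 0 else coeff4 (m - Finsupp.single j 1) f := by
  rw [coeff4, MvPowerSeries.X_def, MvPowerSeries.coeff_mul_monomial]
  by_cases h : m j = 0
  · rw [if_neg, if_pos h]
    rw [Finsupp.single_le_iff]
    omega
  · rw [if_pos, if_neg h, mul_one]
    · rfl
    · rw [Finsupp.single_le_iff]
      omega

lemma coeff4_pd_mul_X_same (f : PS4) (j : Fin 4) (m : Fin 4 →₀ ℕ) :
    coeff4 m (pdF j f * MvPowerSeries.X j) = (m j : ℝ) * coeff4 m f := by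
  rw [coeff4_mul_X]
  by_cases h : m j = 0
  · simp [h]
  · rw [if_neg h, coeff4_pd]
    have h1 : ((m - Finsupp.single j 1 : Fin 4 →₀ ℕ)) j = m j - 1 := by
      rw [Finsupp.tsub_apply, Finsupp.single_eq_same]
    have h2 : m - Finsupp.single j 1 + Finsupp.single j 1 = m :=
      tsub_add_cancel_of_le (by rw [Finsupp.single_le_iff]; omega)
    rw [h1, h2]
    have : ((m j - 1 : ℕ) : ℝ) = (m j : ℝ) - 1 := by
      have : 1 ≤ m j := by omega
      push_cast [this]
      ring
    rw [this]
    ring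

lemma coeff4_pd_mul_X (f : PS4) (i j : Fin 4) (hij : i ≠ j) (m : Fin 4 →₀ ℕ) :
    coeff4 m (pdF i f * MvPowerSeries.X j)
      = if m j = 0 then 0
        else ((m i : ℝ) + 1) * coeff4 (m - Finsupp.single j 1 + Finsupp.single i 1) f := by
  rw [coeff4_mul_X]
  by_cases h : m j = 0
  · simp [h]
  · rw [if_neg h, if_neg h, coeff4_pd]
    have h1 : ((m - Finsupp.single j 1 : Fin 4 →₀ ℕ)) i = m i := by
      rw [Finsupp.tsub_apply, Finsupp.single_apply, if_neg (fun hh => hij hh.symm)]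
      omega
    rw [h1]

/-- Lemma A : the bracket with `q₁` is diagonal. -/
lemma coeffA (f : PS4) (m : Fin 4 →₀ ℕ) :
    coeff4 m (poisF f q1F)
      = (((m 1 : ℝ) + m 3) - ((m 0 : ℝ) + m 2)) * coeff4 m f := by
  have : poisF f q1F
      = pdF 1 f * MvPowerSeries.X 1 - pdF 0 f * MvPowerSeries.X 0
        + pdF 3 f * MvPowerSeries.X 3 - pdF 2 f * MvPowerSeries.X 2 := by
    rw [poisF, pd_q1_0, pd_q1_1, pd_q1_2, pd_q1_3]
  rw [this, coeff4_sub, coeff4_add, coeff4_sub,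
    coeff4_pd_mul_X_same, coeff4_pd_mul_X_same, coeff4_pd_mul_X_same, coeff4_pd_mul_X_same]
  ring

end Brackets
section Unique

lemma mo_sa1 (a b c d : ℕ) :
    mo a b c d - Finsupp.single 3 1 + Finsupp.single 1 1 = mo a (b+1) c (d-1) := by
  ext i
  fin_cases i <;>
    simp [mo, Finsupp.tsub_apply, Finsupp.single_apply]
lemma mo_sa2 (a b c d : ℕ) :
    mo a b c d - Finsupp.single 2 1 + Finsupp.single 0 1 = mo (a+1) b (c-1) d := by
  ext i
  fin_cases i <;>
    simp [mo, Finsupp.tsub_apply, Finsupp.single_apply]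
lemma mo_sa3 (a b c d : ℕ) :
    mo a b c d - Finsupp.single 1 1 + Finsupp.single 3 1 = mo a (b-1) c (d+1) := by
  ext i
  fin_cases i <;>
    simp [mo, Finsupp.tsub_apply, Finsupp.single_apply]
lemma mo_sa4 (a b c d : ℕ) :
    mo a b c d - Finsupp.single 0 1 + Finsupp.single 2 1 = mo (a-1) b (c+1) d := by
  ext i
  fin_cases i <;>
    simp [mo, Finsupp.tsub_apply, Finsupp.single_apply]

/-- Lemma B : coefficient formula for the bracket with `q₂`. -/
lemma coeffB (f : PS4) (a b c d : ℕ) :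
    coeff4 (mo a b c d) (poisF f q2F)
      = (if d = 0 then 0 else ((b:ℝ)+1) * coeff4 (mo a (b+1) c (d-1)) f)
      + (if c = 0 then 0 else ((a:ℝ)+1) * coeff4 (mo (a+1) b (c-1) d) f)
      - (if b = 0 then 0 else ((d:ℝ)+1) * coeff4 (mo a (b-1) c (d+1)) f)
      - (if a = 0 then 0 else ((c:ℝ)+1) * coeff4 (mo (a-1) b (c+1) d) f) := by
  have hq : poisF f q2F
      = pdF 1 f * MvPowerSeries.X 3 + pdF 0 f * MvPowerSeries.X 2
        - pdF 3 f * MvPowerSeries.X 1 - pdF 2 f * MvPowerSeries.X 0 := by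
    rw [poisF, pd_q2_0, pd_q2_1, pd_q2_2, pd_q2_3]
    ring
  rw [hq, coeff4_sub, coeff4_sub, coeff4_add,
    coeff4_pd_mul_X f 1 3 (by decide), coeff4_pd_mul_X f 0 2 (by decide),
    coeff4_pd_mul_X f 3 1 (by decide), coeff4_pd_mul_X f 2 0 (by decide),
    mo_sa1, mo_sa2, mo_sa3, mo_sa4, mo_apply0, mo_apply1, mo_apply2, mo_apply3]

lemma weight_vanish (f : PS4) (H1 : poisF f q1F = 0) (m : Fin 4 →₀ ℕ)
    (hw : m 1 + m 3 ≠ m 0 + m 2) : coeff4 m f = 0 := by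
  have e : coeff4 m (poisF f q1F) = 0 := by rw [H1]; exact coeff4_zero m
  rw [coeffA] at e
  have hne : ((m 1 : ℝ) + m 3) - ((m 0 : ℝ) + m 2) ≠ 0 := by
    intro hh
    apply hw
    have : ((m 1 : ℝ) + m 3) = ((m 0 : ℝ) + m 2) := by linarith
    exact_mod_cast this
  exact (mul_eq_zero.mp e).resolve_left hne

lemma eq_zero_of_commutes_of_col (h : PS4) (H2 : poisF h q2F = 0)
    (Hcol : ∀ a b d : ℕ, coeff4 (mo a b 0 d) h = 0) : h = 0 := by
  have key : ∀ c a b d : ℕ, coeff4 (mo a b c d) h = 0 := by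
    intro c
    induction c using Nat.strong_induction_on with
    | _ c ih =>
      intro a b d
      rcases Nat.eq_zero_or_pos c with rfl | hc
      · exact Hcol a b d
      · obtain ⟨c', rfl⟩ : ∃ c', c = c' + 1 := ⟨c - 1, by omega⟩
        have e : coeff4 (mo (a+1) b c' d) (poisF h q2F) = 0 := by
          rw [H2]; exact coeff4_zero _
        rw [coeffB] at e
        simp only [ih c' (Nat.lt_succ_self c'), mul_zero, ite_self,
          if_neg (show ¬ (a + 1 = 0) by omega), Nat.add_sub_cancel] at e
        have e2 : (if c' = 0 then (0:ℝ)
            else ((a:ℝ)+1+1) * coeff4 (mo (a+1+1) b (c'-1) d) h) = 0 := by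
          rcases Nat.eq_zero_or_pos c' with rfl | hc'
          · simp
          · rw [if_neg (by omega), ih (c'-1) (by omega), mul_zero]
        rw [show ((a:ℝ)+1+1) = ((a+1 : ℕ):ℝ)+1 by push_cast; ring] at e2
        rw [e2] at e
        have e3 : ((c':ℝ)+1) * coeff4 (mo a b (c'+1) d) h = 0 := by linarith
        have hne : ((c':ℝ)+1) ≠ 0 := by positivity
        exact (mul_eq_zero.mp e3).resolve_left hne
  apply MvPowerSeries.ext
  intro m
  have := key (m 2) (m 0) (m 1) (m 3)
  rw [mo_eta] at this
  rw [map_zero]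
  exact this

end Unique
section Delta

lemma coeff4_X_mul (f : PS4) (j : Fin 4) (m : Fin 4 →₀ ℕ) :
    coeff4 m (MvPowerSeries.X j * f)
      = if m j = 0 then 0 else coeff4 (m - Finsupp.single j 1) f := by
  rw [coeff4, MvPowerSeries.X_def, MvPowerSeries.coeff_monomial_mul]
  by_cases h : m j = 0
  · rw [if_neg, if_pos h]
    rw [Finsupp.single_le_iff]
    omega
  · rw [if_pos, if_neg h, one_mul]
    · rfl
    · rw [Finsupp.single_le_iff]
      omega

lemma mo_sub0 (a b c d : ℕ) : mo a b c d - Finsupp.single 0 1 = mo (a-1) b c d := by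
  ext i
  fin_cases i <;> simp [mo, Finsupp.tsub_apply, Finsupp.single_apply]
lemma mo_sub1 (a b c d : ℕ) : mo a b c d - Finsupp.single 1 1 = mo a (b-1) c d := by
  ext i
  fin_cases i <;> simp [mo, Finsupp.tsub_apply, Finsupp.single_apply]
lemma mo_sub3 (a b c d : ℕ) : mo a b c d - Finsupp.single 3 1 = mo a b c (d-1) := by
  ext i
  fin_cases i <;> simp [mo, Finsupp.tsub_apply, Finsupp.single_apply]

lemma mo_eq_zero (a b c d : ℕ) : mo a b c d = 0 ↔ a = 0 ∧ b = 0 ∧ c = 0 ∧ d = 0 := by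
  constructor
  · intro h
    have h0 := congrArg (fun m : Fin 4 →₀ ℕ => m 0) h
    have h1 := congrArg (fun m : Fin 4 →₀ ℕ => m 1) h
    have h2 := congrArg (fun m : Fin 4 →₀ ℕ => m 2) h
    have h3 := congrArg (fun m : Fin 4 →₀ ℕ => m 3) h
    simp at h0 h1 h2 h3
    exact ⟨h0, h1, h2, h3⟩
  · rintro ⟨rfl, rfl, rfl, rfl⟩
    ext i
    fin_cases i <;> simp

lemma coeff4_one (m : Fin 4 →₀ ℕ) : coeff4 m (1 : PS4) = if m = 0 then 1 else 0 := by
  rw [coeff4]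
  classical
  exact MvPowerSeries.coeff_one m

lemma coeff_P_delta (k l a b d : ℕ) :
    coeff4 (mo a b 0 d) (q1F ^ k * q2F ^ l)
      = if a = k + l ∧ b = k ∧ d = l then 1 else 0 := by
  induction k generalizing a b d with
  | zero =>
    induction l generalizing a b d with
    | zero =>
      rw [pow_zero, pow_zero, one_mul, coeff4_one]
      by_cases h : mo a b 0 d = 0
      · rw [if_pos h]
        have := (mo_eq_zero a b 0 d).mp h
        rw [if_pos (by omega)]
      · rw [if_neg h, if_neg]
        intro hh
        exact h ((mo_eq_zero a b 0 d).mpr (by omega))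
    | succ l ihl =>
      have h1 : q1F ^ 0 * q2F ^ (l + 1)
          = MvPowerSeries.X 0 * (MvPowerSeries.X 3 * (q1F ^ 0 * q2F ^ l))
            - MvPowerSeries.X 2 * (MvPowerSeries.X 1 * (q1F ^ 0 * q2F ^ l)) := by
        simp only [q2F]
        ring
      rw [h1, coeff4_sub]
      simp only [coeff4_X_mul, mo_apply0, mo_apply1, mo_apply2, mo_apply3,
        mo_sub0, mo_sub1, mo_sub3, ihl, if_pos rfl]
      split_ifs <;> first | rfl | (exfalso; omega) | ring
  | succ k ihk =>
    have h1 : q1F ^ (k + 1) * q2F ^ l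
        = MvPowerSeries.X 0 * (MvPowerSeries.X 1 * (q1F ^ k * q2F ^ l))
          + MvPowerSeries.X 2 * (MvPowerSeries.X 3 * (q1F ^ k * q2F ^ l)) := by
      simp only [q1F]
      ring
    rw [h1, coeff4_add]
    simp only [coeff4_X_mul, mo_apply0, mo_apply1, mo_apply2, mo_apply3,
      mo_sub0, mo_sub1, mo_sub3, ihk, if_pos rfl]
    split_ifs <;> first | rfl | (exfalso; omega) | ring

end Delta
section Subst

/-- Definitional expansion of the coefficient of `substQF g`. -/
lemma coeff4_subst (g : PS2) (m : Fin 4 →₀ ℕ) :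
    coeff4 m (substQF g)
      = ∑ kl ∈ Finset.range (degOf m + 1) ×ˢ Finset.range (degOf m + 1),
          MvPowerSeries.coeff (Finsupp.single 0 kl.1 + Finsupp.single 1 kl.2) g *
            coeff4 m (q1F ^ kl.1 * q2F ^ kl.2) := rfl

lemma coeff4_subst_mo (g : PS2) (N a b c d : ℕ) (h : a + b + c + d = N) :
    coeff4 (mo a b c d) (substQF g)
      = ∑ kl ∈ Finset.range (N + 1) ×ˢ Finset.range (N + 1),
          MvPowerSeries.coeff (Finsupp.single 0 kl.1 + Finsupp.single 1 kl.2) g *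
            coeff4 (mo a b c d) (q1F ^ kl.1 * q2F ^ kl.2) := by
  rw [coeff4_subst, degOf_mo, h]

lemma subst_br1 (g : PS2) : poisF (substQF g) q1F = 0 := by
  apply MvPowerSeries.ext
  intro m
  rw [map_zero]
  show coeff4 m _ = 0
  rw [coeffA]
  by_cases hw : m 1 + m 3 = m 0 + m 2
  · have hz : ((m 1:ℝ) + m 3) - ((m 0:ℝ) + m 2) = 0 := by
      have : ((m 1:ℝ) + m 3) = ((m 0:ℝ) + m 2) := by exact_mod_cast hw
      linarith
    rw [hz, zero_mul]
  · rw [coeff4_subst]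
    rw [Finset.sum_eq_zero, mul_zero]
    intro kl _
    rw [weight_vanish _ (poisF_Pkl_q1 kl.1 kl.2) m hw, mul_zero]

lemma subst_br2 (g : PS2) : poisF (substQF g) q2F = 0 := by
  have key : ∀ a b c d : ℕ, coeff4 (mo a b c d) (poisF (substQF g) q2F) = 0 := by
    intro a b c d
    set N := a + b + c + d with hN
    set S := Finset.range (N + 1) ×ˢ Finset.range (N + 1) with hS
    set gg : ℕ × ℕ → ℝ :=
      fun kl => MvPowerSeries.coeff (Finsupp.single 0 kl.1 + Finsupp.single 1 kl.2) g with hgg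
    have T1 : (if d = 0 then (0:ℝ)
          else ((b:ℝ)+1) * coeff4 (mo a (b+1) c (d-1)) (substQF g))
        = ∑ kl ∈ S, gg kl *
            (if d = 0 then (0:ℝ)
              else ((b:ℝ)+1) * coeff4 (mo a (b+1) c (d-1)) (q1F ^ kl.1 * q2F ^ kl.2)) := by
      by_cases hd : d = 0
      · simp [hd]
      · rw [if_neg hd, coeff4_subst_mo g N _ _ _ _ (by omega), Finset.mul_sum]
        refine Finset.sum_congr rfl fun kl _ => ?_
        rw [if_neg hd]
        ring
    have T2 : (if c = 0 then (0:ℝ)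
          else ((a:ℝ)+1) * coeff4 (mo (a+1) b (c-1) d) (substQF g))
        = ∑ kl ∈ S, gg kl *
            (if c = 0 then (0:ℝ)
              else ((a:ℝ)+1) * coeff4 (mo (a+1) b (c-1) d) (q1F ^ kl.1 * q2F ^ kl.2)) := by
      by_cases hc : c = 0
      · simp [hc]
      · rw [if_neg hc, coeff4_subst_mo g N _ _ _ _ (by omega), Finset.mul_sum]
        refine Finset.sum_congr rfl fun kl _ => ?_
        rw [if_neg hc]
        ring
    have T3 : (if b = 0 then (0:ℝ)
          else ((d:ℝ)+1) * coeff4 (mo a (b-1) c (d+1)) (substQF g))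
        = ∑ kl ∈ S, gg kl *
            (if b = 0 then (0:ℝ)
              else ((d:ℝ)+1) * coeff4 (mo a (b-1) c (d+1)) (q1F ^ kl.1 * q2F ^ kl.2)) := by
      by_cases hb : b = 0
      · simp [hb]
      · rw [if_neg hb, coeff4_subst_mo g N _ _ _ _ (by omega), Finset.mul_sum]
        refine Finset.sum_congr rfl fun kl _ => ?_
        rw [if_neg hb]
        ring
    have T4 : (if a = 0 then (0:ℝ)
          else ((c:ℝ)+1) * coeff4 (mo (a-1) b (c+1) d) (substQF g))
        = ∑ kl ∈ S, gg kl *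
            (if a = 0 then (0:ℝ)
              else ((c:ℝ)+1) * coeff4 (mo (a-1) b (c+1) d) (q1F ^ kl.1 * q2F ^ kl.2)) := by
      by_cases ha : a = 0
      · simp [ha]
      · rw [if_neg ha, coeff4_subst_mo g N _ _ _ _ (by omega), Finset.mul_sum]
        refine Finset.sum_congr rfl fun kl _ => ?_
        rw [if_neg ha]
        ring
    rw [coeffB, T1, T2, T3, T4, ← Finset.sum_add_distrib, ← Finset.sum_sub_distrib,
      ← Finset.sum_sub_distrib]
    rw [Finset.sum_eq_zero]
    intro kl _
    have hkl : coeff4 (mo a b c d) (poisF (q1F ^ kl.1 * q2F ^ kl.2) q2F) = 0 := by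
      rw [poisF_Pkl_q2]
      exact coeff4_zero _
    rw [coeffB] at hkl
    linear_combination gg kl * hkl
  apply MvPowerSeries.ext
  intro m
  rw [map_zero]
  have := key (m 0) (m 1) (m 2) (m 3)
  rw [mo_eta] at this
  exact this

end Subst
section Main

lemma coeff_subst_col (g : PS2) (a b d : ℕ) :
    coeff4 (mo a b 0 d) (substQF g)
      = if a = b + d
          then MvPowerSeries.coeff (Finsupp.single 0 b + Finsupp.single 1 d) g
          else 0 := by
  rw [coeff4_subst]
  simp only [coeff_P_delta]
  by_cases ha : a = b + d
  · rw [if_pos ha, Finset.sum_eq_single (b, d)]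
    · rw [if_pos ⟨ha, rfl, rfl⟩, mul_one]
    · rintro ⟨x, y⟩ hmem hne
      rw [if_neg, mul_zero]
      rintro ⟨h1, h2, h3⟩
      simp only at h2 h3
      subst h2
      subst h3
      exact hne rfl
    · intro hnot
      exfalso
      apply hnot
      rw [Finset.mem_product]
      constructor <;> (rw [Finset.mem_range, degOf_mo]; omega)
  · rw [if_neg ha]
    apply Finset.sum_eq_zero
    rintro ⟨x, y⟩ _
    rw [if_neg, mul_zero]
    rintro ⟨h1, h2, h3⟩
    simp only at h1 h2 h3
    omega

lemma pdF_sub (i : Fin 4) (u v : PS4) : pdF i (u - v) = pdF i u - pdF i v := by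
  apply MvPowerSeries.ext
  intro m
  rw [map_sub]
  show coeff4 m _ = coeff4 m _ - coeff4 m _
  rw [coeff4_pd, coeff4_pd, coeff4_pd, coeff4_sub]
  ring

lemma poisF_sub (u v w : PS4) : poisF (u - v) w = poisF u w - poisF v w := by
  simp only [poisF, pdF_sub]
  ring

theorem formal_commutant_iff_function_of_q' (f : PS4) :
    (poisF f q1F = 0 ∧ poisF f q2F = 0) ↔ ∃ g : PS2, f = substQF g := by
  constructor
  · rintro ⟨H1, H2⟩
    set g : PS2 := (fun s => coeff4 (mo (s 0 + s 1) (s 0) 0 (s 1)) f) with hg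
    refine ⟨g, ?_⟩
    have hgcoeff : ∀ k l : ℕ,
        MvPowerSeries.coeff (Finsupp.single 0 k + Finsupp.single 1 l) g
          = coeff4 (mo (k + l) k 0 l) f := by
      intro k l
      have h0 : ((Finsupp.single 0 k + Finsupp.single 1 l : Fin 2 →₀ ℕ)) 0 = k := by
        simp [Finsupp.single_apply]
      have h1 : ((Finsupp.single 0 k + Finsupp.single 1 l : Fin 2 →₀ ℕ)) 1 = l := by
        simp [Finsupp.single_apply]
      rw [show MvPowerSeries.coeff (Finsupp.single 0 k + Finsupp.single 1 l) g
          = coeff4 (mo (((Finsupp.single 0 k + Finsupp.single 1 l : Fin 2 →₀ ℕ)) 0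
              + ((Finsupp.single 0 k + Finsupp.single 1 l : Fin 2 →₀ ℕ)) 1)
              (((Finsupp.single 0 k + Finsupp.single 1 l : Fin 2 →₀ ℕ)) 0) 0
              (((Finsupp.single 0 k + Finsupp.single 1 l : Fin 2 →₀ ℕ)) 1)) f from rfl,
        h0, h1]
    have hcol : ∀ a b d : ℕ, coeff4 (mo a b 0 d) (f - substQF g) = 0 := by
      intro a b d
      rw [coeff4_sub, coeff_subst_col]
      by_cases ha : a = b + d
      · rw [if_pos ha, hgcoeff b d, ← ha, sub_self]
      · rw [if_neg ha, sub_zero]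
        apply weight_vanish f H1
        simp only [mo_apply0, mo_apply1, mo_apply2, mo_apply3]
        omega
    have hsub : f - substQF g = 0 := by
      apply eq_zero_of_commutes_of_col _ _ hcol
      rw [poisF_sub, H2, subst_br2, sub_zero]
    exact sub_eq_zero.mp hsub
  · rintro ⟨g, rfl⟩
    exact ⟨subst_br1 g, subst_br2 g⟩

end Main

/-- **Characterization of the formal commutant of `(q₁, q₂)`.**
A formal power series `f` Poisson-commutes with both `q₁` and `q₂` if and only if
`f = g(q₁,q₂)` for some formal power series `g` in two variables. -/
theorem formal_commutant_iff_function_of_q (f : PS4) :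
    (poisF f q1F = 0 ∧ poisF f q2F = 0) ↔ ∃ g : PS2, f = substQF g := by
  exact formal_commutant_iff_function_of_q' f
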